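/- Let p, m ≥ 1, let Q ∈ ℝ^{p×m} with rank Q = p, let L ∈ ℝ^{m×m} be lower unitriangular with Q⁰ := QL in canonical form with witnessing indices c_1,…,c_p, and let Λ₊ = diag(λ_1,…,λ_p) ∈ ℝ^{p×p} with λ_i < 0 for all i, Λ₋ ∈ ℝ^{m×m} diagonal with strictly positive diagonal entries. Set C₀ = -Λ₋^{-1} Qᵀ Λ₊ Σ and, for k ∈ {1,…,p}, ℓ(k) := min(c_p, c_{p-1}, …, c_{p-k+1}). Then for every k ∈ {1,…,p} and every ℓ ∈ {0,…,ℓ(k)-1}: ker(E⁻_ℓ C₀ E⁺_k) = { w ∈ ℝ^p : w_i = 0 for every i ∈ {1,…,k} }. -/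
import Mathlib


/-- A matrix `L` is lower unitriangular if `L i j = 0` whenever `i < j`
and `L i i = 1` for every `i`. -/
def IsLowerUnitriangular {m : ℕ} (L : Matrix (Fin m) (Fin m) ℝ) : Prop :=
  (∀ i j : Fin m, i < j → L i j = 0) ∧ ∀ i : Fin m, L i i = 1

/-- `Q` is in canonical form with witnessing (distinct) column indices `c`. -/
def IsCanonicalFormWith {p m : ℕ} (Q : Matrix (Fin p) (Fin m) ℝ) (c : Fin p → Fin m) : Prop :=
  Function.Injective c ∧
    ∀ i : Fin p,
      Q i (c i) ≠ 0 ∧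
      (∀ j : Fin m, c i < j → (∀ k : Fin p, i < k → j ≠ c k) → Q i j = 0) ∧
      (∀ j : Fin m, j < c i → Q i j = 0)

/-- The antidiagonal permutation matrix `Σ ∈ ℝ^{p×p}`: the (1-indexed) entry `(i,j)`
equals `1` if `i + j = p + 1` and `0` otherwise. -/
def SigmaMat (p : ℕ) : Matrix (Fin p) (Fin p) ℝ :=
  Matrix.of fun i j => if (i : ℕ) + (j : ℕ) + 1 = p then 1 else 0

/-- `E⁻_ℓ ∈ ℝ^{m×m}`: diagonal matrix whose first `ℓ` diagonal entries are `0`,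
the rest being `1`. -/
def Eminus (m : ℕ) (l : ℕ) : Matrix (Fin m) (Fin m) ℝ :=
  Matrix.diagonal fun i => if (i : ℕ) < l then 0 else 1

/-- `E⁺_k ∈ ℝ^{p×p}`: diagonal matrix whose first `k` diagonal entries are `1`,
the rest being `0`. -/
def Eplus (p : ℕ) (k : ℕ) : Matrix (Fin p) (Fin p) ℝ :=
  Matrix.diagonal fun i => if (i : ℕ) < k then 1 else 0

/-- `C₀ = -Λ₋⁻¹ Qᵀ Λ₊ Σ`, where `Λ₊ = diag lam` and `Λ₋ = diag mu`. -/
noncomputable def C0mat {p m : ℕ} (Q : Matrix (Fin p) (Fin m) ℝ)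
    (lam : Fin p → ℝ) (mu : Fin m → ℝ) : Matrix (Fin m) (Fin p) ℝ :=
  -((Matrix.diagonal fun j => (mu j)⁻¹) * Q.transpose * Matrix.diagonal lam * SigmaMat p)

/-- `ℓ(k) = min (c_p, …, c_{p-k+1})` where the `c_r` are taken as 1-indexed column
values: the minimum of `(c r) + 1` over the (0-indexed) rows `r` with `p - k ≤ r`. -/
noncomputable def ellOf {p m : ℕ} (c : Fin p → Fin m) (k : ℕ) : ℕ :=
  sInf {n : ℕ | ∃ r : Fin p, p - k ≤ (r : ℕ) ∧ (c r : ℕ) + 1 = n}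

lemma indep_aux {p m : ℕ} (Q0 : Matrix (Fin p) (Fin m) ℝ) (c : Fin p → Fin m)
    (hc : IsCanonicalFormWith Q0 c) (a : Fin p → ℝ) (l : ℕ)
    (hl : ∀ r : Fin p, a r ≠ 0 → l ≤ (c r : ℕ))
    (h : ∀ j : Fin m, l ≤ (j : ℕ) → ∑ s, a s * Q0 s j = 0) :
    ∀ r, a r = 0 := by
  have key : ∀ n, ∀ r : Fin p, (c r : ℕ) < n → a r = 0 := by
    intro n
    induction n with
    | zero => exact fun r hr => absurd hr (Nat.not_lt_zero _)
    | succ n ih =>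
      intro r hr
      by_cases ha : a r = 0
      · exact ha
      have hcol := h (c r) (hl r ha)
      have hsum : ∑ s, a s * Q0 s (c r) = a r * Q0 r (c r) := by
        apply Finset.sum_eq_single_of_mem r (Finset.mem_univ r)
        intro s _ hs
        rcases lt_trichotomy ((c s : ℕ)) ((c r : ℕ)) with h1 | h1 | h1
        · have := ih s (by omega)
          simp [this]
        · exact absurd (hc.1 (Fin.ext h1)) hs
        · have : Q0 s (c r) = 0 := (hc.2 s).2.2 (c r) (by exact_mod_cast h1)
          simp [this]
      rw [hsum] at hcol
      exact absurd ((mul_eq_zero.mp hcol).resolve_right (hc.2 r).1) ha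
  exact fun r => key ((c r : ℕ) + 1) r (Nat.lt_succ_self _)

lemma sigma_mulVec {p : ℕ} (u : Fin p → ℝ) (s : Fin p) :
    (SigmaMat p).mulVec u s = u ⟨p - 1 - (s : ℕ), by have := s.isLt; omega⟩ := by
  have hs := s.isLt
  rw [Matrix.mulVec, dotProduct,
    Finset.sum_eq_single (⟨p - 1 - (s : ℕ), by omega⟩ : Fin p)]
  · rw [SigmaMat, Matrix.of_apply, if_pos (by simp; omega), one_mul]
  · intro i _ hi
    rw [SigmaMat, Matrix.of_apply, if_neg, zero_mul]
    intro hcond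
    exact hi (Fin.ext (by simp at hcond ⊢; omega))
  · intro hmem
    exact absurd (Finset.mem_univ _) hmem

lemma C0_mulVec {p m : ℕ} (Q : Matrix (Fin p) (Fin m) ℝ)
    (lam : Fin p → ℝ) (mu : Fin m → ℝ) (u : Fin p → ℝ) (j : Fin m) :
    (C0mat Q lam mu).mulVec u j =
      -((mu j)⁻¹ *
        ∑ s : Fin p, (lam s * u ⟨p - 1 - (s : ℕ), by have := s.isLt; omega⟩) * Q s j) := by
  rw [C0mat, Matrix.neg_mulVec, Pi.neg_apply, ← Matrix.mulVec_mulVec,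
    ← Matrix.mulVec_mulVec, ← Matrix.mulVec_mulVec, Matrix.mulVec_diagonal]
  congr 1
  rw [Matrix.mulVec, dotProduct, Finset.mul_sum, Finset.mul_sum]
  apply Finset.sum_congr rfl
  intro s _
  rw [Matrix.mulVec_diagonal, sigma_mulVec, Matrix.transpose_apply]
  ring

lemma eplus_mulVec {p k : ℕ} (w : Fin p → ℝ) :
    (Eplus p k).mulVec w = fun i : Fin p => if (i : ℕ) < k then w i else 0 := by
  funext i
  rw [Eplus, Matrix.mulVec_diagonal]
  by_cases h : (i : ℕ) < k <;> simp [h]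

/-- For `ℓ ∈ {0,…,ℓ(k)-1}`, the kernel `ker (E⁻_ℓ C₀ E⁺_k)` is exactly the set of
vectors `w ∈ ℝ^p` whose first `k` components vanish. -/
theorem kernel_eq_first_k_zero {p m : ℕ} (hp : 1 ≤ p) (hm : 1 ≤ m)
    (Q : Matrix (Fin p) (Fin m) ℝ) (hQ : Q.rank = p)
    (L : Matrix (Fin m) (Fin m) ℝ) (hL : IsLowerUnitriangular L)
    (c : Fin p → Fin m) (hc : IsCanonicalFormWith (Q * L) c)
    (lam : Fin p → ℝ) (hlam : ∀ i, lam i < 0)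
    (mu : Fin m → ℝ) (hmu : ∀ j, 0 < mu j)
    (k : ℕ) (hk1 : 1 ≤ k) (hk2 : k ≤ p) :
    ∀ l : ℕ, l < ellOf c k →
      {w : Fin p → ℝ | (Eminus m l * C0mat Q lam mu * Eplus p k).mulVec w = 0} =
        {w : Fin p → ℝ | ∀ i : Fin p, (i : ℕ) < k → w i = 0} := by
  intro l hl
  ext w
  simp only [Set.mem_setOf_eq]
  constructor
  · intro h
    set u : Fin p → ℝ := fun i => if (i : ℕ) < k then w i else 0 with hu
    set a : Fin p → ℝ :=
      fun s => lam s * u ⟨p - 1 - (s : ℕ), by have := s.isLt; omega⟩ with ha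
    -- columns of Q beyond l kill a
    have hcolQ : ∀ j : Fin m, l ≤ (j : ℕ) → ∑ s, a s * Q s j = 0 := by
      intro j hj
      have hrow := congrFun h j
      rw [← Matrix.mulVec_mulVec, ← Matrix.mulVec_mulVec, eplus_mulVec, ← hu,
        Eminus, Matrix.mulVec_diagonal, if_neg (by omega), one_mul,
        C0_mulVec, Pi.zero_apply, neg_eq_zero] at hrow
      have hmuj : (mu j)⁻¹ ≠ 0 := inv_ne_zero (ne_of_gt (hmu j))
      exact (mul_eq_zero.mp hrow).resolve_left hmuj
    -- transfer to Q * L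
    have hcolQ0 : ∀ j : Fin m, l ≤ (j : ℕ) → ∑ s, a s * (Q * L) s j = 0 := by
      intro j hj
      have step : ∑ s, a s * (Q * L) s j = ∑ t, (∑ s, a s * Q s t) * L t j := by
        simp only [Matrix.mul_apply, Finset.mul_sum, Finset.sum_mul]
        rw [Finset.sum_comm]
        exact Finset.sum_congr rfl fun t _ =>
          Finset.sum_congr rfl fun s _ => (mul_assoc _ _ _).symm
      rw [step]
      apply Finset.sum_eq_zero
      intro t _
      by_cases ht : (t : ℕ) < (j : ℕ)
      · rw [hL.1 t j (Fin.lt_def.mpr ht), mul_zero]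
      · rw [hcolQ t (by omega), zero_mul]
    -- a is zero
    have haz : ∀ r, a r = 0 := by
      apply indep_aux (Q * L) c hc a l _ hcolQ0
      intro r har
      have hrk : p - k ≤ (r : ℕ) := by
        by_contra hcon
        apply har
        have hcond : ¬ ((p - 1 - (r : ℕ)) < k) := by have := r.isLt; omega
        simp [ha, hu, hcond]
      have hmem : ((c r : ℕ) + 1) ∈
          {n : ℕ | ∃ r' : Fin p, p - k ≤ (r' : ℕ) ∧ (c r' : ℕ) + 1 = n} := ⟨r, hrk, rfl⟩
      have := Nat.sInf_le hmem
      rw [ellOf] at hl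
      omega
    intro i hik
    have hi := i.isLt
    have hz := haz ⟨p - 1 - (i : ℕ), by omega⟩
    simp only [ha] at hz
    have h2 := (mul_eq_zero.mp hz).resolve_left (ne_of_lt (hlam _))
    simp only [show p - 1 - (p - 1 - (i : ℕ)) = (i : ℕ) from by omega, Fin.eta, hu, hik,
      if_true] at h2
    exact h2
  · intro h
    have hu0 : (Eplus p k).mulVec w = 0 := by
      rw [eplus_mulVec]
      funext i
      by_cases hik : (i : ℕ) < k
      · simp [hik, h i hik]
      · simp [hik]
    rw [← Matrix.mulVec_mulVec, hu0, Matrix.mulVec_zero]
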